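/- Assume the Hypothesis. For all a ≠ b in F there exist permutations τ_{a,b}, ρ_{a,b}, χ_{a,b} of O, and whenever additionally a,b ≠ 1, permutations α_{a,b}, β_{a,b} of O, such that for every x ∈ O: f(ax + b(1−x)) = f(a)τ_{a,b}(x) + f(b)(1−τ_{a,b}(x)); f((a − (1−x)b)/x) = (f(a) − (1−ρ_{a,b}(x))f(b))/ρ_{a,b}(x); f((a − xb)/(1−x)) = (f(a) − χ_{a,b}(x)f(b))/(1−χ_{a,b}(x)); f((abx − bx − ab + a)/(ax − x − b + 1)) = (f(a)f(b)α_{a,b}(x) − f(b)α_{a,b}(x) − f(a)f(b) + f(a))/(f(a)α_{a,b}(x) − α_{a,b}(x) − f(b) + 1); and f((a − b − abx + bx)/(a − b − ax + x)) = (f(a) − f(b) − f(a)f(b)β_{a,b}(x) + f(b)β_{a,b}(x))/(f(a) − f(b) − f(a)β_{a,b}(x) + β_{a,b}(x)). -/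

import Mathlib

open scoped Classical

/-- The cross-ratio `[a,b;c,d]` on the projective line `F ∪ {∞}` (modelled as
`Option F`, with `none` playing the role of `∞`), with the usual conventions
at `∞`; junk value `0` when two or more of the arguments are `∞`. -/
noncomputable def crossRatio {F : Type*} [Field F] :
    Option F → Option F → Option F → Option F → F
  | none,   some b, some c, some d => (d - b) / (c - b)
  | some a, none,   some c, some d => (c - a) / (d - a)
  | some a, some b, none,   some d => (d - b) / (d - a)
  | some a, some b, some c, none   => (c - a) / (c - b)
  | some a, some b, some c, some d => ((c - a) / (c - b)) * ((d - b) / (d - a))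
  | _, _, _, _ => 0

/-- A permutation `f` of the projective line is `O`-preserving if for all
quadruples of distinct points, `[a,b;c,d] ∈ O ↔ [f a, f b; f c, f d] ∈ O`. -/
def OPreserving {F : Type*} [Field F] (O : Set F) (f : Equiv.Perm (Option F)) : Prop :=
  ∀ a b c d : Option F, a ≠ b → a ≠ c → a ≠ d → b ≠ c → b ≠ d → c ≠ d →
    (crossRatio a b c d ∈ O ↔ crossRatio (f a) (f b) (f c) (f d) ∈ O)

/-- The map `F → F` induced by a permutation of `F ∪ {∞}` fixing `∞`
(junk value `0` if `f` maps a finite point to `∞`). -/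
noncomputable def fmap {F : Type*} [Field F] (f : Equiv.Perm (Option F)) (a : F) : F :=
  (f (some a)).getD 0

/-- Division with values in the projective line: `p / q`, read as `∞` when `q = 0`. -/
noncomputable def fdiv {F : Type*} [Field F] (p q : F) : Option F :=
  if q = 0 then none else some (p / q)

/-- Corollary 2.4: existence of the permutations `τ_{a,b}`, `ρ_{a,b}`, `χ_{a,b}`,
`α_{a,b}`, `β_{a,b}` of `O`. -/
theorem fsome {F : Type*} [Field F] (f : Equiv.Perm (Option F)) (hinf : f none = none)
    (c : F) : f (some c) = some (fmap f c) := by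
  cases h : f (some c) with
  | none =>
    have : f (some c) = f none := by rw [h]; exact hinf.symm
    
    exact absurd (f.injective this) (by simp)
  | some v => simp [fmap, h]

theorem symm_none {F : Type*} [Field F] (f : Equiv.Perm (Option F)) (hinf : f none = none) :
    f.symm none = none := by
  exact (Equiv.symm_apply_eq f).mpr hinf.symm

theorem fmap_roundtrip {F : Type*} [Field F] (f : Equiv.Perm (Option F))
    (hinf : f none = none) (c : F) : fmap f.symm (fmap f c) = c := by
  have h1 := fsome f hinf c
  have := fsome f.symm (symm_none f hinf) (fmap f c)
  rw [← h1, Equiv.symm_apply_apply] at this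
  exact (Option.some.injEq _ _ ▸ this).symm

theorem fmap_ne {F : Type*} [Field F] (f : Equiv.Perm (Option F)) (hinf : f none = none)
    {c d : F} (h : c ≠ d) : fmap f c ≠ fmap f d := by
  intro he
  apply h
  have := fsome f hinf c
  rw [he, ← fsome f hinf d] at this
  simpa using f.injective this

theorem fmap_fix {F : Type*} [Field F] (f : Equiv.Perm (Option F)) {c : F}
    (h : f (some c) = some c) : fmap f c = c := by simp [fmap, h]

theorem opres_symm {F : Type*} [Field F] (O : Set F) (f : Equiv.Perm (Option F))
    (hf : OPreserving O f) : OPreserving O f.symm := by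
  intro a b c d hab hac had hbc hbd hcd
  have := hf (f.symm a) (f.symm b) (f.symm c) (f.symm d)
    (fun h => hab (f.symm.injective h)) (fun h => hac (f.symm.injective h))
    (fun h => had (f.symm.injective h)) (fun h => hbc (f.symm.injective h))
    (fun h => hbd (f.symm.injective h)) (fun h => hcd (f.symm.injective h))
  simp only [Equiv.apply_symm_apply] at this
  exact this.symm

theorem core {F : Type*} [Field F] (O : Set F)
    (f : Equiv.Perm (Option F))
    (p p' : F → Option F) (CR CR' : Option F → F) (D D' : Option F → Prop)
    (h1 : ∀ x ∈ O, D (p x) ∧ CR (p x) = x)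
    (h1' : ∀ y ∈ O, D' (p' y) ∧ CR' (p' y) = y)
    (h2 : ∀ P Q, D P → D Q → CR P = CR Q → P = Q)
    (h2' : ∀ P Q, D' P → D' Q → CR' P = CR' Q → P = Q)
    (hD : ∀ P, D P → D' (f P))
    (hD' : ∀ P, D' P → D (f.symm P))
    (hO3 : ∀ P, D P → (CR P ∈ O ↔ CR' (f P) ∈ O)) :
    ∃ g : {x // x ∈ O} ≃ {x // x ∈ O}, ∀ (x : F) (hx : x ∈ O),
      f (p x) = p' (g ⟨x, hx⟩) := by
  have key : ∀ x ∈ O, CR' (f (p x)) ∈ O ∧ f (p x) = p' (CR' (f (p x))) := by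
    intro x hx
    obtain ⟨hd, hc⟩ := h1 x hx
    have hmem : CR' (f (p x)) ∈ O := by
      have := hO3 (p x) hd
      rw [hc] at this
      exact this.mp hx
    exact ⟨hmem, h2' (f (p x)) (p' (CR' (f (p x)))) (hD _ hd) (h1' _ hmem).1
      ((h1' _ hmem).2).symm⟩
  have key' : ∀ y ∈ O, CR (f.symm (p' y)) ∈ O ∧ f.symm (p' y) = p (CR (f.symm (p' y))) := by
    intro y hy
    obtain ⟨hd, hc⟩ := h1' y hy
    have hD2 : D (f.symm (p' y)) := hD' _ hd
    have hmem : CR (f.symm (p' y)) ∈ O := by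
      have := hO3 (f.symm (p' y)) hD2
      rw [Equiv.apply_symm_apply, hc] at this
      exact this.mpr hy
    exact ⟨hmem, h2 (f.symm (p' y)) (p (CR (f.symm (p' y)))) hD2 (h1 _ hmem).1
      ((h1 _ hmem).2).symm⟩
  refine ⟨⟨fun x => ⟨CR' (f (p x.1)), (key x.1 x.2).1⟩,
           fun y => ⟨CR (f.symm (p' y.1)), (key' y.1 y.2).1⟩, ?_, ?_⟩, ?_⟩
  · rintro ⟨x, hx⟩
    have h := (key x hx).2
    ext
    simp only
    rw [← h, Equiv.symm_apply_apply, (h1 x hx).2]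
  · rintro ⟨y, hy⟩
    have h := (key' y hy).2
    ext
    simp only
    rw [← h, Equiv.apply_symm_apply, (h1' y hy).2]
  · intro x hx
    exact (key x hx).2

/-- `P` is a finite point distinct from `a` and `b`. -/
def Dne {F : Type*} [Field F] (a b : F) (P : Option F) : Prop :=
  P ≠ none ∧ P ≠ some a ∧ P ≠ some b

theorem Dne_transfer {F : Type*} [Field F] (g : Equiv.Perm (Option F))
    (hgnone : g none = none) (a b : F) :
    ∀ P, Dne a b P → Dne (fmap g a) (fmap g b) (g P) := by
  rintro P ⟨hn, ha, hb⟩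
  refine ⟨?_, ?_, ?_⟩
  · intro h; exact hn (g.injective (h.trans hgnone.symm))
  · intro h; rw [← fsome g hgnone] at h; exact ha (g.injective h)
  · intro h; rw [← fsome g hgnone] at h; exact hb (g.injective h)

theorem tau_h1 {F : Type*} [Field F] (a b : F) (hab : a ≠ b)
    (x : F) (hx0 : x ≠ 0) (hx1 : x ≠ 1) :
    Dne a b (some (a * x + b * (1 - x))) ∧
      crossRatio none (some b) (some a) (some (a * x + b * (1 - x))) = x := by
  have hba : a - b ≠ 0 := sub_ne_zero.mpr hab
  refine ⟨⟨by simp, ?_, ?_⟩, ?_⟩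
  · simp only [ne_eq, Option.some.injEq]
    intro h
    apply hx1
    have : (a - b) * (x - 1) = 0 := by linear_combination h
    rcases mul_eq_zero.mp this with h' | h'
    · exact absurd h' hba
    · exact sub_eq_zero.mp h' 
  · simp only [ne_eq, Option.some.injEq]
    intro h
    apply hx0
    have : (a - b) * x = 0 := by linear_combination h
    rcases mul_eq_zero.mp this with h' | h'
    · exact absurd h' hba
    · exact h'
  · show (a * x + b * (1 - x) - b) / (a - b) = x
    field_simp
    ring

theorem tau_h2 {F : Type*} [Field F] (a b : F) (hab : a ≠ b) :
    ∀ P Q, Dne a b P → Dne a b Q →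
      crossRatio none (some b) (some a) P = crossRatio none (some b) (some a) Q → P = Q := by
  have hba : a - b ≠ 0 := sub_ne_zero.mpr hab
  rintro (_ | t) (_ | s) ⟨hn, _, _⟩ ⟨hn', _, _⟩ h
  · rfl
  · exact absurd rfl hn
  · exact absurd rfl hn'
  · have h' : (t - b) / (a - b) = (s - b) / (a - b) := h
    rw [div_eq_div_iff hba hba] at h'
    have h2 : (t - s) * (a - b) = 0 := by linear_combination h'
    rcases mul_eq_zero.mp h2 with h3 | h3
    · rw [sub_eq_zero.mp h3]
    · exact absurd h3 hba

theorem tau_O3 {F : Type*} [Field F] (O : Set F) (g : Equiv.Perm (Option F))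
    (hg : OPreserving O g) (hgnone : g none = none) (a b : F) (hab : a ≠ b) :
    ∀ P, Dne a b P →
      (crossRatio none (some b) (some a) P ∈ O ↔
        crossRatio none (some (fmap g b)) (some (fmap g a)) (g P) ∈ O) := by
  rintro P ⟨hn, ha, hb⟩
  have := hg none (some b) (some a) P (by simp) (by simp) (Ne.symm hn)
    (by simp [Ne.symm hab]) (Ne.symm hb) (Ne.symm ha)
  rwa [hgnone, fsome g hgnone, fsome g hgnone] at this

theorem tau_exists {F : Type*} [Field F] (O : Set F) (hO : ∀ x ∈ O, x ≠ 0 ∧ x ≠ 1)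
    (f : Equiv.Perm (Option F)) (hf : OPreserving O f) (hinf : f none = none)
    (a b : F) (hab : a ≠ b) :
    ∃ g : {x // x ∈ O} ≃ {x // x ∈ O}, ∀ (x : F) (hx : x ∈ O),
      f (some (a * x + b * (1 - x))) =
        some (fmap f a * (g ⟨x, hx⟩ : F) + fmap f b * (1 - (g ⟨x, hx⟩ : F))) := by
  have hAB : fmap f a ≠ fmap f b := fmap_ne f hinf hab
  have hsn := symm_none f hinf
  exact core O f
    (fun x => some (a * x + b * (1 - x)))
    (fun y => some (fmap f a * y + fmap f b * (1 - y)))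
    (crossRatio none (some b) (some a))
    (crossRatio none (some (fmap f b)) (some (fmap f a)))
    (Dne a b) (Dne (fmap f a) (fmap f b))
    (fun x hx => tau_h1 a b hab x (hO x hx).1 (hO x hx).2)
    (fun y hy => tau_h1 _ _ hAB y (hO y hy).1 (hO y hy).2)
    (tau_h2 a b hab) (tau_h2 _ _ hAB)
    (fun P hP => Dne_transfer f hinf a b P hP)
    (fun P hP => by
      have := Dne_transfer f.symm hsn _ _ P hP
      rwa [fmap_roundtrip f hinf, fmap_roundtrip f hinf] at this)
    (tau_O3 O f hf hinf a b hab)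

/-! ### ρ -/

theorem rho_h1 {F : Type*} [Field F] (a b : F) (hab : a ≠ b)
    (x : F) (hx0 : x ≠ 0) (hx1 : x ≠ 1) :
    Dne a b (some ((a - (1 - x) * b) / x)) ∧
      crossRatio none (some b) (some ((a - (1 - x) * b) / x)) (some a) = x := by
  have hba : a - b ≠ 0 := sub_ne_zero.mpr hab
  have hna : (a - (1 - x) * b) / x ≠ a := by
    intro h
    rw [div_eq_iff hx0] at h
    have : (1 - x) * (a - b) = 0 := by linear_combination h
    rcases mul_eq_zero.mp this with h' | h'
    · exact hx1 (by linear_combination -h')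
    · exact hba h'
  have hnb : (a - (1 - x) * b) / x ≠ b := by
    intro h
    rw [div_eq_iff hx0] at h
    exact hba (by linear_combination h)
  refine ⟨⟨by simp, by simpa using hna, by simpa using hnb⟩, ?_⟩
  show (a - b) / ((a - (1 - x) * b) / x - b) = x
  rw [div_eq_iff (sub_ne_zero.mpr hnb)]
  field_simp
  ring

theorem rho_h2 {F : Type*} [Field F] (a b : F) (hab : a ≠ b) :
    ∀ P Q, Dne a b P → Dne a b Q →
      crossRatio none (some b) P (some a) = crossRatio none (some b) Q (some a) → P = Q := by
  have hba : a - b ≠ 0 := sub_ne_zero.mpr hab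
  rintro (_ | t) (_ | s) ⟨hn, _, hb⟩ ⟨hn', _, hb'⟩ h
  · rfl
  · exact absurd rfl hn
  · exact absurd rfl hn'
  · have htb : t - b ≠ 0 := sub_ne_zero.mpr (by simpa using hb)
    have hsb : s - b ≠ 0 := sub_ne_zero.mpr (by simpa using hb')
    have h' : (a - b) / (t - b) = (a - b) / (s - b) := h
    rw [div_eq_div_iff htb hsb] at h'
    have h2 : (a - b) * (s - t) = 0 := by linear_combination h'
    rcases mul_eq_zero.mp h2 with h3 | h3
    · exact absurd h3 hba
    · rw [sub_eq_zero.mp h3]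

theorem rho_O3 {F : Type*} [Field F] (O : Set F) (g : Equiv.Perm (Option F))
    (hg : OPreserving O g) (hgnone : g none = none) (a b : F) (hab : a ≠ b) :
    ∀ P, Dne a b P →
      (crossRatio none (some b) P (some a) ∈ O ↔
        crossRatio none (some (fmap g b)) (g P) (some (fmap g a)) ∈ O) := by
  rintro P ⟨hn, ha, hb⟩
  have := hg none (some b) P (some a) (by simp) (Ne.symm hn) (by simp)
    (Ne.symm hb) (by simp [Ne.symm hab]) ha
  rwa [hgnone, fsome g hgnone, fsome g hgnone] at this

theorem rho_exists {F : Type*} [Field F] (O : Set F) (hO : ∀ x ∈ O, x ≠ 0 ∧ x ≠ 1)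
    (f : Equiv.Perm (Option F)) (hf : OPreserving O f) (hinf : f none = none)
    (a b : F) (hab : a ≠ b) :
    ∃ g : {x // x ∈ O} ≃ {x // x ∈ O}, ∀ (x : F) (hx : x ∈ O),
      f (some ((a - (1 - x) * b) / x)) =
        some ((fmap f a - (1 - (g ⟨x, hx⟩ : F)) * fmap f b) / (g ⟨x, hx⟩ : F)) := by
  have hAB : fmap f a ≠ fmap f b := fmap_ne f hinf hab
  have hsn := symm_none f hinf
  exact core O f
    (fun x => some ((a - (1 - x) * b) / x))
    (fun y => some ((fmap f a - (1 - y) * fmap f b) / y))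
    (fun P => crossRatio none (some b) P (some a))
    (fun P => crossRatio none (some (fmap f b)) P (some (fmap f a)))
    (Dne a b) (Dne (fmap f a) (fmap f b))
    (fun x hx => rho_h1 a b hab x (hO x hx).1 (hO x hx).2)
    (fun y hy => rho_h1 _ _ hAB y (hO y hy).1 (hO y hy).2)
    (rho_h2 a b hab) (rho_h2 _ _ hAB)
    (fun P hP => Dne_transfer f hinf a b P hP)
    (fun P hP => by
      have := Dne_transfer f.symm hsn _ _ P hP
      rwa [fmap_roundtrip f hinf, fmap_roundtrip f hinf] at this)
    (rho_O3 O f hf hinf a b hab)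

/-! ### χ -/

theorem chi_h1 {F : Type*} [Field F] (a b : F) (hab : a ≠ b)
    (x : F) (hx0 : x ≠ 0) (hx1 : x ≠ 1) :
    Dne a b (some ((a - x * b) / (1 - x))) ∧
      crossRatio none (some ((a - x * b) / (1 - x))) (some b) (some a) = x := by
  have hba : a - b ≠ 0 := sub_ne_zero.mpr hab
  have h1x : (1 : F) - x ≠ 0 := sub_ne_zero.mpr (Ne.symm hx1)
  have hna : (a - x * b) / (1 - x) ≠ a := by
    intro h
    rw [div_eq_iff h1x] at h
    have : x * (a - b) = 0 := by linear_combination h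
    rcases mul_eq_zero.mp this with h' | h'
    · exact hx0 h'
    · exact hba h'
  have hnb : (a - x * b) / (1 - x) ≠ b := by
    intro h
    rw [div_eq_iff h1x] at h
    exact hba (by linear_combination h)
  refine ⟨⟨by simp, by simpa using hna, by simpa using hnb⟩, ?_⟩
  show (a - (a - x * b) / (1 - x)) / (b - (a - x * b) / (1 - x)) = x
  rw [div_eq_iff (sub_ne_zero.mpr (Ne.symm hnb))]
  field_simp
  ring

theorem chi_h2 {F : Type*} [Field F] (a b : F) (hab : a ≠ b) :
    ∀ P Q, Dne a b P → Dne a b Q →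
      crossRatio none P (some b) (some a) = crossRatio none Q (some b) (some a) → P = Q := by
  have hba : a - b ≠ 0 := sub_ne_zero.mpr hab
  rintro (_ | t) (_ | s) ⟨hn, _, hb⟩ ⟨hn', _, hb'⟩ h
  · rfl
  · exact absurd rfl hn
  · exact absurd rfl hn'
  · have htb : b - t ≠ 0 := sub_ne_zero.mpr (Ne.symm (by simpa using hb))
    have hsb : b - s ≠ 0 := sub_ne_zero.mpr (Ne.symm (by simpa using hb'))
    have h' : (a - t) / (b - t) = (a - s) / (b - s) := h
    rw [div_eq_div_iff htb hsb] at h'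
    have h2 : (a - b) * (s - t) = 0 := by linear_combination -h'
    rcases mul_eq_zero.mp h2 with h3 | h3
    · exact absurd h3 hba
    · rw [sub_eq_zero.mp h3]

theorem chi_O3 {F : Type*} [Field F] (O : Set F) (g : Equiv.Perm (Option F))
    (hg : OPreserving O g) (hgnone : g none = none) (a b : F) (hab : a ≠ b) :
    ∀ P, Dne a b P →
      (crossRatio none P (some b) (some a) ∈ O ↔
        crossRatio none (g P) (some (fmap g b)) (some (fmap g a)) ∈ O) := by
  rintro P ⟨hn, ha, hb⟩
  have := hg none P (some b) (some a) (Ne.symm hn) (by simp) (by simp)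
    hb ha (by simp [Ne.symm hab])
  rwa [hgnone, fsome g hgnone, fsome g hgnone] at this

theorem chi_exists {F : Type*} [Field F] (O : Set F) (hO : ∀ x ∈ O, x ≠ 0 ∧ x ≠ 1)
    (f : Equiv.Perm (Option F)) (hf : OPreserving O f) (hinf : f none = none)
    (a b : F) (hab : a ≠ b) :
    ∃ g : {x // x ∈ O} ≃ {x // x ∈ O}, ∀ (x : F) (hx : x ∈ O),
      f (some ((a - x * b) / (1 - x))) =
        some ((fmap f a - (g ⟨x, hx⟩ : F) * fmap f b) / (1 - (g ⟨x, hx⟩ : F))) := by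
  have hAB : fmap f a ≠ fmap f b := fmap_ne f hinf hab
  have hsn := symm_none f hinf
  exact core O f
    (fun x => some ((a - x * b) / (1 - x)))
    (fun y => some ((fmap f a - y * fmap f b) / (1 - y)))
    (fun P => crossRatio none P (some b) (some a))
    (fun P => crossRatio none P (some (fmap f b)) (some (fmap f a)))
    (Dne a b) (Dne (fmap f a) (fmap f b))
    (fun x hx => chi_h1 a b hab x (hO x hx).1 (hO x hx).2)
    (fun y hy => chi_h1 _ _ hAB y (hO y hy).1 (hO y hy).2)
    (chi_h2 a b hab) (chi_h2 _ _ hAB)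
    (fun P hP => Dne_transfer f hinf a b P hP)
    (fun P hP => by
      have := Dne_transfer f.symm hsn _ _ P hP
      rwa [fmap_roundtrip f hinf, fmap_roundtrip f hinf] at this)
    (chi_O3 O f hf hinf a b hab)

/-! ### α, β common -/

/-- `P` differs from `a`, `b`, `1` (but may be `∞`). -/
def Dab1 {F : Type*} [Field F] (a b : F) (P : Option F) : Prop :=
  P ≠ some a ∧ P ≠ some b ∧ P ≠ some 1

theorem Dab1_transfer {F : Type*} [Field F] (g : Equiv.Perm (Option F))
    (hgnone : g none = none) (hg1 : g (some 1) = some 1) (a b : F) :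
    ∀ P, Dab1 a b P → Dab1 (fmap g a) (fmap g b) (g P) := by
  rintro P ⟨ha, hb, h1⟩
  refine ⟨?_, ?_, ?_⟩
  · intro h; rw [← fsome g hgnone] at h; exact ha (g.injective h)
  · intro h; rw [← fsome g hgnone] at h; exact hb (g.injective h)
  · intro h; rw [← hg1] at h; exact h1 (g.injective h)

/-! ### α -/

theorem alpha_h1 {F : Type*} [Field F] (a b : F) (hab : a ≠ b) (ha1 : a ≠ 1) (hb1 : b ≠ 1)
    (x : F) (hx0 : x ≠ 0) (hx1 : x ≠ 1) :
    Dab1 a b (fdiv (a * b * x - b * x - a * b + a) (a * x - x - b + 1)) ∧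
      crossRatio (some a) (some b) (fdiv (a * b * x - b * x - a * b + a) (a * x - x - b + 1))
        (some 1) = x := by
  have hba : a - b ≠ 0 := sub_ne_zero.mpr hab
  have h1a : 1 - a ≠ 0 := sub_ne_zero.mpr (Ne.symm ha1)
  have h1b : 1 - b ≠ 0 := sub_ne_zero.mpr (Ne.symm hb1)
  have hxm1 : x - 1 ≠ 0 := sub_ne_zero.mpr hx1
  by_cases hden : a * x - x - b + 1 = 0
  · rw [fdiv, if_pos hden]
    refine ⟨⟨by simp, by simp, by simp⟩, ?_⟩
    show (1 - b) / (1 - a) = x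
    rw [div_eq_iff h1a]
    linear_combination hden
  · rw [fdiv, if_neg hden]
    set s := (a * b * x - b * x - a * b + a) / (a * x - x - b + 1) with hs
    have hsa : s ≠ a := by
      intro h
      rw [hs, div_eq_iff hden] at h
      have : x * ((a - 1) * (b - a)) = 0 := by linear_combination h
      rcases mul_eq_zero.mp this with h' | h'
      · exact hx0 h'
      · rcases mul_eq_zero.mp h' with h'' | h''
        · exact ha1 (by linear_combination h'')
        · exact hab (by linear_combination -h'')
    have hsb : s ≠ b := by
      intro h
      rw [hs, div_eq_iff hden] at h
      have : (a - b) * (1 - b) = 0 := by linear_combination h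
      rcases mul_eq_zero.mp this with h' | h'
      · exact hba h'
      · exact h1b h'
    have hs1 : s ≠ 1 := by
      intro h
      rw [hs, div_eq_iff hden, one_mul] at h
      have : (a - 1) * ((b - 1) * (x - 1)) = 0 := by linear_combination h
      rcases mul_eq_zero.mp this with h' | h'
      · exact ha1 (by linear_combination h')
      · rcases mul_eq_zero.mp h' with h'' | h''
        · exact hb1 (by linear_combination h'')
        · exact hxm1 h''
    refine ⟨⟨by simpa using hsa, by simpa using hsb, by simpa using hs1⟩, ?_⟩
    show (s - a) / (s - b) * ((1 - b) / (1 - a)) = x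
    have hsb' : s - b ≠ 0 := sub_ne_zero.mpr hsb
    rw [div_mul_div_comm, div_eq_iff (mul_ne_zero hsb' h1a), hs]
    have hden' : a * x - x - b + 1 ≠ 0 := hden
    rw [div_sub' hden', div_sub' hden', div_mul_eq_mul_div, div_mul_eq_mul_div, mul_div_assoc',
      div_eq_div_iff hden' hden']
    ring

theorem alpha_h2 {F : Type*} [Field F] (a b : F) (hab : a ≠ b) (ha1 : a ≠ 1) (hb1 : b ≠ 1) :
    ∀ P Q, Dab1 a b P → Dab1 a b Q →
      crossRatio (some a) (some b) P (some 1) = crossRatio (some a) (some b) Q (some 1) →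
        P = Q := by
  have hba : a - b ≠ 0 := sub_ne_zero.mpr hab
  have h1a : 1 - a ≠ 0 := sub_ne_zero.mpr (Ne.symm ha1)
  have h1b : 1 - b ≠ 0 := sub_ne_zero.mpr (Ne.symm hb1)
  have hc : (1 - b) / (1 - a) ≠ 0 := div_ne_zero h1b h1a
  have key : ∀ t : F, t ≠ a → t ≠ b →
      crossRatio (some a) (some b) (some t) (some 1) = (1 - b) / (1 - a) → False := by
    intro t hta htb h
    have h' : (t - a) / (t - b) * ((1 - b) / (1 - a)) = 1 * ((1 - b) / (1 - a)) := by
      rw [one_mul]; exact h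
    have h2 := mul_right_cancel₀ hc h'
    rw [div_eq_one_iff_eq (sub_ne_zero.mpr htb)] at h2
    exact hab (by linear_combination -h2)
  rintro (_ | t) (_ | s) ⟨hta, htb, ht1⟩ ⟨hsa, hsb, hs1⟩ h
  · rfl
  · exact absurd h.symm (fun h' => key s (by simpa using hsa) (by simpa using hsb) h')
  · exact absurd h (fun h' => key t (by simpa using hta) (by simpa using htb) h')
  · have htb' : t - b ≠ 0 := sub_ne_zero.mpr (by simpa using htb)
    have hsb' : s - b ≠ 0 := sub_ne_zero.mpr (by simpa using hsb)
    have h' : (t - a) / (t - b) * ((1 - b) / (1 - a)) =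
        (s - a) / (s - b) * ((1 - b) / (1 - a)) := h
    have h2 := mul_right_cancel₀ hc h'
    rw [div_eq_div_iff htb' hsb'] at h2
    have h3 : (a - b) * (t - s) = 0 := by linear_combination h2
    rcases mul_eq_zero.mp h3 with h4 | h4
    · exact absurd h4 hba
    · rw [sub_eq_zero.mp h4]

theorem alpha_O3 {F : Type*} [Field F] (O : Set F) (g : Equiv.Perm (Option F))
    (hg : OPreserving O g) (hgnone : g none = none) (hg1 : g (some 1) = some 1)
    (a b : F) (hab : a ≠ b) (ha1 : a ≠ 1) (hb1 : b ≠ 1) :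
    ∀ P, Dab1 a b P →
      (crossRatio (some a) (some b) P (some 1) ∈ O ↔
        crossRatio (some (fmap g a)) (some (fmap g b)) (g P) (some 1) ∈ O) := by
  rintro P ⟨ha, hb, h1⟩
  have := hg (some a) (some b) P (some 1) (by simp [hab]) (Ne.symm ha) (by simp [ha1])
    (Ne.symm hb) (by simp [hb1]) h1
  rwa [hg1, fsome g hgnone, fsome g hgnone] at this

theorem alpha_exists {F : Type*} [Field F] (O : Set F) (hO : ∀ x ∈ O, x ≠ 0 ∧ x ≠ 1)
    (f : Equiv.Perm (Option F)) (hf : OPreserving O f) (hinf : f none = none)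
    (h1 : f (some 1) = some 1)
    (a b : F) (hab : a ≠ b) (ha1 : a ≠ 1) (hb1 : b ≠ 1) :
    ∃ g : {x // x ∈ O} ≃ {x // x ∈ O}, ∀ (x : F) (hx : x ∈ O),
      f (fdiv (a * b * x - b * x - a * b + a) (a * x - x - b + 1)) =
        fdiv (fmap f a * fmap f b * (g ⟨x, hx⟩ : F) - fmap f b * (g ⟨x, hx⟩ : F) -
          fmap f a * fmap f b + fmap f a)
          (fmap f a * (g ⟨x, hx⟩ : F) - (g ⟨x, hx⟩ : F) - fmap f b + 1) := by
  have hAB : fmap f a ≠ fmap f b := fmap_ne f hinf hab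
  have hf1 : fmap f 1 = 1 := fmap_fix f h1
  have hA1 : fmap f a ≠ 1 := hf1 ▸ fmap_ne f hinf ha1
  have hB1 : fmap f b ≠ 1 := hf1 ▸ fmap_ne f hinf hb1
  have hsn := symm_none f hinf
  have hs1 : f.symm (some 1) = some 1 := (Equiv.symm_apply_eq f).mpr h1.symm
  exact core O f
    (fun x => fdiv (a * b * x - b * x - a * b + a) (a * x - x - b + 1))
    (fun y => fdiv (fmap f a * fmap f b * y - fmap f b * y - fmap f a * fmap f b + fmap f a)
      (fmap f a * y - y - fmap f b + 1))
    (fun P => crossRatio (some a) (some b) P (some 1))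
    (fun P => crossRatio (some (fmap f a)) (some (fmap f b)) P (some 1))
    (Dab1 a b) (Dab1 (fmap f a) (fmap f b))
    (fun x hx => alpha_h1 a b hab ha1 hb1 x (hO x hx).1 (hO x hx).2)
    (fun y hy => alpha_h1 _ _ hAB hA1 hB1 y (hO y hy).1 (hO y hy).2)
    (alpha_h2 a b hab ha1 hb1) (alpha_h2 _ _ hAB hA1 hB1)
    (fun P hP => Dab1_transfer f hinf h1 a b P hP)
    (fun P hP => by
      have := Dab1_transfer f.symm hsn hs1 _ _ P hP
      rwa [fmap_roundtrip f hinf, fmap_roundtrip f hinf] at this)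
    (alpha_O3 O f hf hinf h1 a b hab ha1 hb1)

/-! ### β -/

theorem beta_h1 {F : Type*} [Field F] (a b : F) (hab : a ≠ b) (ha1 : a ≠ 1) (hb1 : b ≠ 1)
    (x : F) (hx0 : x ≠ 0) (hx1 : x ≠ 1) :
    Dab1 a b (fdiv (a - b - a * b * x + b * x) (a - b - a * x + x)) ∧
      crossRatio (some a) (fdiv (a - b - a * b * x + b * x) (a - b - a * x + x)) (some b)
        (some 1) = x := by
  have hba : a - b ≠ 0 := sub_ne_zero.mpr hab
  have h1a : 1 - a ≠ 0 := sub_ne_zero.mpr (Ne.symm ha1)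
  have h1b : 1 - b ≠ 0 := sub_ne_zero.mpr (Ne.symm hb1)
  have hxm1 : x - 1 ≠ 0 := sub_ne_zero.mpr hx1
  by_cases hden : a - b - a * x + x = 0
  · rw [fdiv, if_pos hden]
    refine ⟨⟨by simp, by simp, by simp⟩, ?_⟩
    show (b - a) / (1 - a) = x
    rw [div_eq_iff h1a]
    linear_combination -hden
  · rw [fdiv, if_neg hden]
    set u := (a - b - a * b * x + b * x) / (a - b - a * x + x) with hu
    have hua : u ≠ a := by
      intro h
      rw [hu, div_eq_iff hden] at h
      have : (a - b) * ((1 - a) * (1 - x)) = 0 := by linear_combination h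
      rcases mul_eq_zero.mp this with h' | h'
      · exact hba h'
      · rcases mul_eq_zero.mp h' with h'' | h''
        · exact h1a h''
        · exact hxm1 (by linear_combination -h'')
    have hub : u ≠ b := by
      intro h
      rw [hu, div_eq_iff hden] at h
      have : (a - b) * (1 - b) = 0 := by linear_combination h
      rcases mul_eq_zero.mp this with h' | h'
      · exact hba h'
      · exact h1b h'
    have hu1 : u ≠ 1 := by
      intro h
      rw [hu, div_eq_iff hden, one_mul] at h
      have : x * ((a - 1) * (1 - b)) = 0 := by linear_combination h
      rcases mul_eq_zero.mp this with h' | h'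
      · exact hx0 h'
      · rcases mul_eq_zero.mp h' with h'' | h''
        · exact ha1 (by linear_combination h'')
        · exact h1b h''
    refine ⟨⟨by simpa using hua, by simpa using hub, by simpa using hu1⟩, ?_⟩
    show (b - a) / (b - u) * ((1 - u) / (1 - a)) = x
    have hbu : b - u ≠ 0 := sub_ne_zero.mpr (Ne.symm hub)
    rw [div_mul_div_comm, div_eq_iff (mul_ne_zero hbu h1a), hu]
    field_simp
    ring

theorem beta_h2 {F : Type*} [Field F] (a b : F) (hab : a ≠ b) (ha1 : a ≠ 1) (hb1 : b ≠ 1) :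
    ∀ P Q, Dab1 a b P → Dab1 a b Q →
      crossRatio (some a) P (some b) (some 1) = crossRatio (some a) Q (some b) (some 1) →
        P = Q := by
  have hba : b - a ≠ 0 := sub_ne_zero.mpr (Ne.symm hab)
  have h1a : 1 - a ≠ 0 := sub_ne_zero.mpr (Ne.symm ha1)
  have h1b : 1 - b ≠ 0 := sub_ne_zero.mpr (Ne.symm hb1)
  have key : ∀ t : F, t ≠ b → t ≠ 1 →
      crossRatio (some a) (some t) (some b) (some 1) = (b - a) / (1 - a) → False := by
    intro t htb ht1 h
    have hbt : b - t ≠ 0 := sub_ne_zero.mpr (Ne.symm htb)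
    have h' : (b - a) / (b - t) * ((1 - t) / (1 - a)) = (b - a) / (1 - a) := h
    rw [div_mul_div_comm, div_eq_div_iff (mul_ne_zero hbt h1a) h1a] at h'
    have h2 : (b - a) * ((1 - a) * (1 - b)) = 0 := by linear_combination h'
    rcases mul_eq_zero.mp h2 with h3 | h3
    · exact hba h3
    · rcases mul_eq_zero.mp h3 with h4 | h4
      · exact h1a h4
      · exact h1b h4
  rintro (_ | t) (_ | s) ⟨hta, htb, ht1⟩ ⟨hsa, hsb, hs1⟩ h
  · rfl
  · exact absurd h.symm (fun h' => key s (by simpa using hsb) (by simpa using hs1) h')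
  · exact absurd h (fun h' => key t (by simpa using htb) (by simpa using ht1) h')
  · have hbt : b - t ≠ 0 := sub_ne_zero.mpr (Ne.symm (by simpa using htb))
    have hbs : b - s ≠ 0 := sub_ne_zero.mpr (Ne.symm (by simpa using hsb))
    have h' : (b - a) / (b - t) * ((1 - t) / (1 - a)) =
        (b - a) / (b - s) * ((1 - s) / (1 - a)) := h
    rw [div_mul_div_comm, div_mul_div_comm,
      div_eq_div_iff (mul_ne_zero hbt h1a) (mul_ne_zero hbs h1a)] at h'
    have h2 : (b - a) * ((1 - a) * ((1 - b) * (t - s))) = 0 := by linear_combination h'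
    rcases mul_eq_zero.mp h2 with h3 | h3
    · exact absurd h3 hba
    · rcases mul_eq_zero.mp h3 with h4 | h4
      · exact absurd h4 h1a
      · rcases mul_eq_zero.mp h4 with h5 | h5
        · exact absurd h5 h1b
        · rw [sub_eq_zero.mp h5]

theorem beta_O3 {F : Type*} [Field F] (O : Set F) (g : Equiv.Perm (Option F))
    (hg : OPreserving O g) (hgnone : g none = none) (hg1 : g (some 1) = some 1)
    (a b : F) (hab : a ≠ b) (ha1 : a ≠ 1) (hb1 : b ≠ 1) :
    ∀ P, Dab1 a b P →
      (crossRatio (some a) P (some b) (some 1) ∈ O ↔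
        crossRatio (some (fmap g a)) (g P) (some (fmap g b)) (some 1) ∈ O) := by
  rintro P ⟨ha, hb, h1⟩
  have := hg (some a) P (some b) (some 1) (Ne.symm ha) (by simp [hab]) (by simp [ha1])
    hb h1 (by simp [hb1])
  rwa [hg1, fsome g hgnone, fsome g hgnone] at this

theorem beta_exists {F : Type*} [Field F] (O : Set F) (hO : ∀ x ∈ O, x ≠ 0 ∧ x ≠ 1)
    (f : Equiv.Perm (Option F)) (hf : OPreserving O f) (hinf : f none = none)
    (h1 : f (some 1) = some 1)
    (a b : F) (hab : a ≠ b) (ha1 : a ≠ 1) (hb1 : b ≠ 1) :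
    ∃ g : {x // x ∈ O} ≃ {x // x ∈ O}, ∀ (x : F) (hx : x ∈ O),
      f (fdiv (a - b - a * b * x + b * x) (a - b - a * x + x)) =
        fdiv (fmap f a - fmap f b - fmap f a * fmap f b * (g ⟨x, hx⟩ : F) +
          fmap f b * (g ⟨x, hx⟩ : F))
          (fmap f a - fmap f b - fmap f a * (g ⟨x, hx⟩ : F) + (g ⟨x, hx⟩ : F)) := by
  have hAB : fmap f a ≠ fmap f b := fmap_ne f hinf hab
  have hf1 : fmap f 1 = 1 := fmap_fix f h1
  have hA1 : fmap f a ≠ 1 := hf1 ▸ fmap_ne f hinf ha1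
  have hB1 : fmap f b ≠ 1 := hf1 ▸ fmap_ne f hinf hb1
  have hsn := symm_none f hinf
  have hs1 : f.symm (some 1) = some 1 := (Equiv.symm_apply_eq f).mpr h1.symm
  exact core O f
    (fun x => fdiv (a - b - a * b * x + b * x) (a - b - a * x + x))
    (fun y => fdiv (fmap f a - fmap f b - fmap f a * fmap f b * y + fmap f b * y)
      (fmap f a - fmap f b - fmap f a * y + y))
    (fun P => crossRatio (some a) P (some b) (some 1))
    (fun P => crossRatio (some (fmap f a)) P (some (fmap f b)) (some 1))
    (Dab1 a b) (Dab1 (fmap f a) (fmap f b))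
    (fun x hx => beta_h1 a b hab ha1 hb1 x (hO x hx).1 (hO x hx).2)
    (fun y hy => beta_h1 _ _ hAB hA1 hB1 y (hO y hy).1 (hO y hy).2)
    (beta_h2 a b hab ha1 hb1) (beta_h2 _ _ hAB hA1 hB1)
    (fun P hP => Dab1_transfer f hinf h1 a b P hP)
    (fun P hP => by
      have := Dab1_transfer f.symm hsn hs1 _ _ P hP
      rwa [fmap_roundtrip f hinf, fmap_roundtrip f hinf] at this)
    (beta_O3 O f hf hinf h1 a b hab ha1 hb1)


theorem exists_perms_tau_rho_chi_alpha_beta {F : Type*} [Field F]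
    (O : Set F) (hne : O.Nonempty) (hO : ∀ x ∈ O, x ≠ 0 ∧ x ≠ 1)
    (f : Equiv.Perm (Option F)) (hf : OPreserving O f)
    (hinf : f none = none) (h0 : f (some 0) = some 0) (h1 : f (some 1) = some 1)
    (a b : F) (hab : a ≠ b) :
    (∃ τ : {x // x ∈ O} ≃ {x // x ∈ O}, ∀ (x : F) (hx : x ∈ O),
      fmap f (a * x + b * (1 - x)) =
        fmap f a * (τ ⟨x, hx⟩ : F) + fmap f b * (1 - (τ ⟨x, hx⟩ : F))) ∧
    (∃ ρ : {x // x ∈ O} ≃ {x // x ∈ O}, ∀ (x : F) (hx : x ∈ O),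
      fmap f ((a - (1 - x) * b) / x) =
        (fmap f a - (1 - (ρ ⟨x, hx⟩ : F)) * fmap f b) / (ρ ⟨x, hx⟩ : F)) ∧
    (∃ χ : {x // x ∈ O} ≃ {x // x ∈ O}, ∀ (x : F) (hx : x ∈ O),
      fmap f ((a - x * b) / (1 - x)) =
        (fmap f a - (χ ⟨x, hx⟩ : F) * fmap f b) / (1 - (χ ⟨x, hx⟩ : F))) ∧
    (a ≠ 1 → b ≠ 1 →
      (∃ α : {x // x ∈ O} ≃ {x // x ∈ O}, ∀ (x : F) (hx : x ∈ O),
        f (fdiv (a * b * x - b * x - a * b + a) (a * x - x - b + 1)) =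
          fdiv (fmap f a * fmap f b * (α ⟨x, hx⟩ : F) - fmap f b * (α ⟨x, hx⟩ : F) -
                  fmap f a * fmap f b + fmap f a)
               (fmap f a * (α ⟨x, hx⟩ : F) - (α ⟨x, hx⟩ : F) - fmap f b + 1)) ∧
      (∃ β : {x // x ∈ O} ≃ {x // x ∈ O}, ∀ (x : F) (hx : x ∈ O),
        f (fdiv (a - b - a * b * x + b * x) (a - b - a * x + x)) =
          fdiv (fmap f a - fmap f b - fmap f a * fmap f b * (β ⟨x, hx⟩ : F) +
                  fmap f b * (β ⟨x, hx⟩ : F))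
               (fmap f a - fmap f b - fmap f a * (β ⟨x, hx⟩ : F) + (β ⟨x, hx⟩ : F)))) := by
  refine ⟨?_, ?_, ?_, fun ha1 hb1 => ⟨?_, ?_⟩⟩
  · obtain ⟨g, hg⟩ := tau_exists O hO f hf hinf a b hab
    refine ⟨g, fun x hx => ?_⟩
    have h := hg x hx
    rw [fsome f hinf] at h
    exact Option.some.inj h
  · obtain ⟨g, hg⟩ := rho_exists O hO f hf hinf a b hab
    refine ⟨g, fun x hx => ?_⟩
    have h := hg x hx
    rw [fsome f hinf] at h
    exact Option.some.inj h
  · obtain ⟨g, hg⟩ := chi_exists O hO f hf hinf a b hab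
    refine ⟨g, fun x hx => ?_⟩
    have h := hg x hx
    rw [fsome f hinf] at h
    exact Option.some.inj h
  · exact alpha_exists O hO f hf hinf h1 a b hab ha1 hb1
  · exact beta_exists O hO f hf hinf h1 a b hab ha1 hb1
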